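/- arXiv:1401.5455 — 2 statements merged into one kernel-verified Lean document; each statement's English description precedes it below -/
import Mathlib

section
/- Let d = 1 and let b : [0,1] × ℝ → ℝ be Borel measurable with ‖b‖_∞ ≤ 1. Then E exp( (1/16) ( ∫₀¹ b(1−t, W_{1−t}) · W_{1−t}/(2 − 2t) dt )² ) ≤ C₂, where C₂ := E ∫₀¹ exp( |W_{1−t}|²/(4(1−t)) ) dt/(2√(1−t)) is a finite universal constant. -/
open MeasureTheory ProbabilityTheory Set
open scoped ENNReal NNReal

noncomputable section


/-- Tangent line inequality for `exp (x^2/16)`. -/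
lemma tangent_aux (m x : ℝ) :
    Real.exp (m ^ 2 / 16) * (1 + m / 8 * (x - m)) ≤ Real.exp (x ^ 2 / 16) := by
  have h1 : 1 + m / 8 * (x - m) ≤ 1 + (x ^ 2 - m ^ 2) / 16 := by nlinarith [sq_nonneg (x - m)]
  have h2 : 1 + (x ^ 2 - m ^ 2) / 16 ≤ Real.exp ((x ^ 2 - m ^ 2) / 16) := by
    have := Real.add_one_le_exp ((x ^ 2 - m ^ 2) / 16); linarith
  have h3 := Real.exp_pos (m ^ 2 / 16)
  calc Real.exp (m ^ 2 / 16) * (1 + m / 8 * (x - m))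
      ≤ Real.exp (m ^ 2 / 16) * Real.exp ((x ^ 2 - m ^ 2) / 16) := by nlinarith
    _ = Real.exp (x ^ 2 / 16) := by rw [← Real.exp_add]; ring_nf

lemma w_intervalIntegrable :
    IntervalIntegrable (fun t : ℝ => 1 / (2 * Real.sqrt (1 - t))) volume 0 1 := by
  have h0 : IntervalIntegrable (fun u : ℝ => u ^ (-(1/2) : ℝ)) volume 0 1 :=
    intervalIntegral.intervalIntegrable_rpow' (by norm_num)
  have h1 : IntervalIntegrable (fun u : ℝ => 1 / (2 * Real.sqrt u)) volume 0 1 := by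
    rw [intervalIntegrable_iff_integrableOn_Ioc_of_le zero_le_one] at h0 ⊢
    refine IntegrableOn.congr_fun (h0.const_mul (1/2)) (fun u hu => ?_) measurableSet_Ioc
    have hu0 : (0:ℝ) < u := hu.1
    rw [Real.sqrt_eq_rpow, Real.rpow_neg hu0.le]
    ring
  have := (h1.comp_sub_left 1)
  simpa using this.symm

lemma w_integrableOn :
    IntegrableOn (fun t : ℝ => 1 / (2 * Real.sqrt (1 - t))) (Icc 0 1) volume := by
  rw [integrableOn_Icc_iff_integrableOn_Ioc]
  exact (intervalIntegrable_iff_integrableOn_Ioc_of_le zero_le_one).1 w_intervalIntegrable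

lemma w_integral : ∫ t in Icc (0:ℝ) 1, 1 / (2 * Real.sqrt (1 - t)) = 1 := by
  rw [integral_Icc_eq_integral_Ioc,
    ← intervalIntegral.integral_of_le zero_le_one]
  have h1 : (∫ t in (0:ℝ)..1, (fun u : ℝ => 1 / (2 * Real.sqrt u)) (1 - t))
      = ∫ u in (1-(1:ℝ))..(1-(0:ℝ)), 1 / (2 * Real.sqrt u) :=
    intervalIntegral.integral_comp_sub_left (fun u : ℝ => 1 / (2 * Real.sqrt u)) 1
  simp only [sub_self, sub_zero] at h1
  rw [show (∫ t in (0:ℝ)..1, 1 / (2 * Real.sqrt (1 - t)))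
      = ∫ t in (0:ℝ)..1, (fun u : ℝ => 1 / (2 * Real.sqrt u)) (1 - t) from rfl, h1]
  have h2 : EqOn (fun u : ℝ => 1 / (2 * Real.sqrt u))
      (fun u : ℝ => (1/2) * u ^ (-(1/2) : ℝ)) (Set.uIcc 0 1) := by
    intro u hu
    rw [Set.uIcc_of_le zero_le_one] at hu
    rcases eq_or_lt_of_le hu.1 with h | h
    · simp [← h, Real.zero_rpow (by norm_num : (-(1/2) : ℝ) ≠ 0)]
    · simp only
      rw [Real.sqrt_eq_rpow, Real.rpow_neg h.le]
      ring
  rw [intervalIntegral.integral_congr h2, intervalIntegral.integral_const_mul,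
    integral_rpow (Or.inl (by norm_num))]
  norm_num

lemma w_lintegral :
    ∫⁻ t in Icc (0:ℝ) 1, ENNReal.ofReal (1 / (2 * Real.sqrt (1 - t))) = 1 := by
  rw [← ofReal_integral_eq_lintegral_ofReal w_integrableOn
    (ae_of_all _ fun t => by positivity), w_integral, ENNReal.ofReal_one]

lemma ofReal_integral_le {α : Type*} [MeasurableSpace α] {μ : Measure α} {h : α → ℝ}
    (hi : Integrable h μ) :
    ENNReal.ofReal (∫ a, h a ∂μ) ≤ ∫⁻ a, ENNReal.ofReal (h a) ∂μ := by
  calc ENNReal.ofReal (∫ a, h a ∂μ) ≤ ENNReal.ofReal (∫ a, max (h a) 0 ∂μ) :=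
        ENNReal.ofReal_le_ofReal (integral_mono hi hi.pos_part fun a => le_max_left _ _)
    _ = ∫⁻ a, ENNReal.ofReal (max (h a) 0) ∂μ :=
        ofReal_integral_eq_lintegral_ofReal hi.pos_part (ae_of_all _ fun a => le_max_right _ _)
    _ = ∫⁻ a, ENNReal.ofReal (h a) ∂μ := by
        refine lintegral_congr fun a => ?_
        rcases le_total (h a) 0 with h' | h'
        · simp [max_eq_right h', ENNReal.ofReal_eq_zero.2 h']
        · rw [max_eq_left h']

lemma key (x c : ℝ → ℝ) (hc1 : ∀ t ∈ Icc (0:ℝ) 1, |c t| ≤ 1) :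
    ENNReal.ofReal (Real.exp ((1 / 16) *
        (∫ t in (0:ℝ)..1, c t * x t / (2 - 2 * t)) ^ 2))
      ≤ ∫⁻ t in Icc (0:ℝ) 1, ENNReal.ofReal
          (Real.exp ((x t) ^ 2 / (4 * (1 - t))) / (2 * Real.sqrt (1 - t))) ∂volume := by
  set F : ℝ → ℝ := fun t => c t * x t / (2 - 2 * t) with hFdef
  have hP1 : ∀ t ∈ Icc (0:ℝ) 1, (1 : ℝ) / (2 * Real.sqrt (1 - t))
      ≤ Real.exp ((x t) ^ 2 / (4 * (1 - t))) / (2 * Real.sqrt (1 - t)) := by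
    intro t ht
    by_cases ht1 : t = 1
    · simp [ht1]
    · have hlt : t < 1 := lt_of_le_of_ne ht.2 ht1
      have h1t : (0:ℝ) < 1 - t := by linarith
      have hs : (0:ℝ) < 2 * Real.sqrt (1 - t) := by
        have := Real.sqrt_pos.2 h1t; linarith
      have hx1 : (1:ℝ) ≤ Real.exp ((x t) ^ 2 / (4 * (1 - t))) :=
        Real.one_le_exp (by positivity)
      exact div_le_div_of_nonneg_right hx1 hs.le
  by_cases hi : IntervalIntegrable F volume 0 1
  · -- main case
    set m : ℝ := ∫ t in (0:ℝ)..1, F t with hm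
    have hFIoc : IntegrableOn F (Ioc 0 1) volume :=
      (intervalIntegrable_iff_integrableOn_Ioc_of_le zero_le_one).1 hi
    have hFI : IntegrableOn F (Icc 0 1) volume :=
      (integrableOn_Icc_iff_integrableOn_Ioc enorm_ne_top).2 hFIoc
    have hmIcc : m = ∫ t in Icc (0:ℝ) 1, F t := by
      rw [hm, intervalIntegral.integral_of_le zero_le_one, integral_Icc_eq_integral_Ioc]
    set h : ℝ → ℝ := fun t =>
      Real.exp (m ^ 2 / 16) *
        ((1 - m ^ 2 / 8) * (1 / (2 * Real.sqrt (1 - t))) + m / 8 * F t) with hhdef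
    have hhI : IntegrableOn h (Icc 0 1) volume :=
      (((w_integrableOn.const_mul _).add (hFI.const_mul _)).const_mul _)
    have hint : ∫ t in Icc (0:ℝ) 1, h t = Real.exp (m ^ 2 / 16) := by
      simp only [hhdef]
      rw [integral_const_mul, integral_add (w_integrableOn.const_mul _) (hFI.const_mul _),
        integral_const_mul, integral_const_mul, w_integral, ← hmIcc]
      ring
    have hpt : ∀ t ∈ Icc (0:ℝ) 1, ENNReal.ofReal (h t) ≤ ENNReal.ofReal
        (Real.exp ((x t) ^ 2 / (4 * (1 - t))) / (2 * Real.sqrt (1 - t))) := by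
      intro t ht
      apply ENNReal.ofReal_le_ofReal
      by_cases ht1 : t = 1
      · have : F 1 = 0 := by simp [hFdef]
        simp [hhdef, ht1, this]
      · have hlt : t < 1 := lt_of_le_of_ne ht.2 ht1
        have h1t : (0:ℝ) < 1 - t := by linarith
        have hw : (0:ℝ) < Real.sqrt (1 - t) := Real.sqrt_pos.2 h1t
        have hss : Real.sqrt (1 - t) * Real.sqrt (1 - t) = 1 - t :=
          Real.mul_self_sqrt h1t.le
        set f : ℝ := c t * x t / Real.sqrt (1 - t) with hf
        have hFt : F t = f * (1 / (2 * Real.sqrt (1 - t))) := by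
          simp only [hFdef, hf]
          rw [div_mul_div_comm, mul_one,
            show Real.sqrt (1-t) * (2*Real.sqrt (1-t)) = 2*(1-t) by
              rw [show Real.sqrt (1-t) * (2*Real.sqrt (1-t))
                  = 2*(Real.sqrt (1-t)*Real.sqrt (1-t)) by ring, hss]]
          ring_nf
        have hstep1 : h t = Real.exp (m ^ 2 / 16) * (1 + m / 8 * (f - m)) *
            (1 / (2 * Real.sqrt (1 - t))) := by
          simp only [hhdef]; rw [hFt]; ring
        have hstep2 : Real.exp (f ^ 2 / 16) ≤ Real.exp ((x t) ^ 2 / (4 * (1 - t))) := by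
          apply Real.exp_le_exp.2
          have hcsq : (c t) ^ 2 ≤ 1 := by
            have := hc1 t ht
            nlinarith [abs_nonneg (c t), sq_abs (c t)]
          have hfsq : f ^ 2 = (c t) ^ 2 * (x t) ^ 2 / (1 - t) := by
            rw [hf, div_pow]
            rw [show Real.sqrt (1 - t) ^ 2 = 1 - t by rw [sq]; exact hss]
            ring
          have hb1 : f ^ 2 ≤ (x t) ^ 2 / (1 - t) := by
            rw [hfsq]
            apply div_le_div_of_nonneg_right ?_ h1t.le
            nlinarith [sq_nonneg (x t)]
          have hb2 : (0:ℝ) ≤ (x t) ^ 2 / (1 - t) := by positivity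
          calc f ^ 2 / 16 ≤ ((x t) ^ 2 / (1 - t)) / 16 := by linarith
            _ ≤ ((x t) ^ 2 / (1 - t)) / 4 := by linarith
            _ = (x t) ^ 2 / (4 * (1 - t)) := by rw [div_div, mul_comm]
        calc h t ≤ Real.exp (f ^ 2 / 16) * (1 / (2 * Real.sqrt (1 - t))) := by
              rw [hstep1]
              exact mul_le_mul_of_nonneg_right (tangent_aux m f) (by positivity)
          _ ≤ Real.exp ((x t) ^ 2 / (4 * (1 - t))) * (1 / (2 * Real.sqrt (1 - t))) :=
              mul_le_mul_of_nonneg_right hstep2 (by positivity)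
          _ = Real.exp ((x t) ^ 2 / (4 * (1 - t))) / (2 * Real.sqrt (1 - t)) := by ring
    have hexp : (1 / 16 : ℝ) * m ^ 2 = m ^ 2 / 16 := by ring
    calc ENNReal.ofReal (Real.exp ((1 / 16) * m ^ 2))
        = ENNReal.ofReal (∫ t in Icc (0:ℝ) 1, h t) := by rw [hexp, hint]
      _ ≤ ∫⁻ t in Icc (0:ℝ) 1, ENNReal.ofReal (h t) ∂volume := ofReal_integral_le hhI
      _ ≤ ∫⁻ t in Icc (0:ℝ) 1, ENNReal.ofReal
            (Real.exp ((x t) ^ 2 / (4 * (1 - t))) / (2 * Real.sqrt (1 - t))) ∂volume :=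
          lintegral_mono_ae ((ae_restrict_mem measurableSet_Icc).mono fun t ht => hpt t ht)
  · rw [intervalIntegral.integral_undef hi]
    norm_num
    calc (1 : ℝ≥0∞)
        = ∫⁻ t in Icc (0:ℝ) 1, ENNReal.ofReal (1 / (2 * Real.sqrt (1 - t))) ∂volume :=
          w_lintegral.symm
      _ ≤ ∫⁻ t in Icc (0:ℝ) 1, ENNReal.ofReal
            (Real.exp ((x t) ^ 2 / (4 * (1 - t))) / (2 * Real.sqrt (1 - t))) ∂volume :=
          lintegral_mono_ae ((ae_restrict_mem measurableSet_Icc).mono fun t ht =>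
            ENNReal.ofReal_le_ofReal (hP1 t ht))

lemma gauss_calc (v : ℝ) (hv : 0 < v) :
    ∫⁻ y, ENNReal.ofReal (Real.exp (y ^ 2 / (4 * v))) ∂(gaussianReal 0 v.toNNReal)
      = ENNReal.ofReal (Real.sqrt 2) := by
  have hvne : v.toNNReal ≠ 0 := by
    simp only [ne_eq, Real.toNNReal_eq_zero, not_le]; exact hv
  have hcoe : ((v.toNNReal : ℝ≥0) : ℝ) = v := Real.coe_toNNReal _ hv.le
  have hmeas : Measurable fun y : ℝ => ENNReal.ofReal (Real.exp (y ^ 2 / (4 * v))) :=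
    (Real.measurable_exp.comp ((measurable_id.pow_const 2).div_const _)).ennreal_ofReal
  rw [gaussianReal_of_var_ne_zero _ hvne,
    lintegral_withDensity_eq_lintegral_mul _ (measurable_gaussianPDF _ _) hmeas]
  have hpdf : ∀ y : ℝ, (gaussianPDF 0 v.toNNReal * fun y => ENNReal.ofReal (Real.exp (y ^ 2 / (4 * v)))) y
      = ENNReal.ofReal ((Real.sqrt (2 * Real.pi * v))⁻¹ * Real.exp (-(1 / (4 * v)) * y ^ 2)) := by
    intro y
    simp only [Pi.mul_apply, gaussianPDF, gaussianPDFReal]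
    rw [← ENNReal.ofReal_mul (by positivity)]
    congr 1
    rw [hcoe, mul_assoc, ← Real.exp_add]
    congr 2
    field_simp
    ring
  rw [lintegral_congr hpdf]
  have hb : (0:ℝ) < 1 / (4 * v) := by positivity
  have hInt : Integrable (fun y : ℝ =>
      (Real.sqrt (2 * Real.pi * v))⁻¹ * Real.exp (-(1 / (4 * v)) * y ^ 2)) volume :=
    (integrable_exp_neg_mul_sq hb).const_mul _
  rw [← ofReal_integral_eq_lintegral_ofReal hInt (ae_of_all _ fun y => by positivity)]
  congr 1
  rw [integral_const_mul, integral_gaussian]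
  have h1 : Real.pi / (1 / (4 * v)) = 4 * (Real.pi * v) := by field_simp
  have h2 : Real.sqrt (4 * (Real.pi * v)) = 2 * Real.sqrt (Real.pi * v) := by
    rw [show (4:ℝ) * (Real.pi * v) = 2 ^ 2 * (Real.pi * v) by ring,
      Real.sqrt_mul (by positivity), Real.sqrt_sq (by norm_num)]
  have h3 : Real.sqrt (2 * Real.pi * v) = Real.sqrt 2 * Real.sqrt (Real.pi * v) := by
    rw [mul_assoc, Real.sqrt_mul (by norm_num)]
  rw [h1, h2, h3]
  have hpv : (0:ℝ) < Real.sqrt (Real.pi * v) := Real.sqrt_pos.2 (by positivity)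
  have hs2 : Real.sqrt 2 * Real.sqrt 2 = 2 := Real.mul_self_sqrt (by norm_num)
  have hs2' : (0:ℝ) < Real.sqrt 2 := Real.sqrt_pos.2 (by norm_num)
  field_simp
  have hs2sq : Real.sqrt 2 ^ 2 = 2 := by rw [sq]; exact hs2
  linear_combination (-1) * hs2sq


/-- A standard one-dimensional Brownian motion on a probability space. -/
structure IsBrownianMotion1D {Ω : Type*} [MeasurableSpace Ω] (P : Measure Ω)
    (W : Ω → ℝ → ℝ) : Prop where
  meas : ∀ t : ℝ, Measurable fun ω => W ω t
  init : ∀ᵐ ω ∂P, W ω 0 = 0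
  cont : ∀ᵐ ω ∂P, Continuous (W ω)
  incr_law : ∀ s t : ℝ, 0 ≤ s → s ≤ t →
    Measure.map (fun ω => W ω t - W ω s) P = gaussianReal 0 (Real.toNNReal (t - s))
  indep_incr : ∀ (n : ℕ) (t : Fin (n + 1) → ℝ), Monotone t → 0 ≤ t 0 →
    iIndepFun
      (fun (i : Fin n) ω => W ω (t i.succ) - W ω (t i.castSucc)) P

/-- For `d = 1` and Borel measurable `b` with `‖b‖_∞ ≤ 1`,
`E exp ((1/16) (∫_0^1 b (1-t, W_{1-t}) W_{1-t} / (2 - 2t) dt)²) ≤ C₂` where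
`C₂ = E ∫_0^1 exp (|W_{1-t}|² / (4(1-t))) dt / (2√(1-t))` is a finite universal constant. -/
theorem exp_estimate_I2 {Ω : Type*} [MeasurableSpace Ω] (P : Measure Ω)
    [IsProbabilityMeasure P] (W : Ω → ℝ → ℝ) (hW : IsBrownianMotion1D P W)
    (b : ℝ → ℝ → ℝ) (hb_meas : Measurable (Function.uncurry b))
    (hb_bdd : ∀ t ∈ Icc (0 : ℝ) 1, ∀ x, |b t x| ≤ 1) :
    (∫⁻ ω, ENNReal.ofReal
        (Real.exp ((1 / 16) *
          (∫ t in (0 : ℝ)..1, b (1 - t) (W ω (1 - t)) * W ω (1 - t) / (2 - 2 * t)) ^ 2)) ∂P)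
      ≤ ∫⁻ ω, (∫⁻ t in Icc (0 : ℝ) 1, ENNReal.ofReal
          (Real.exp ((W ω (1 - t)) ^ 2 / (4 * (1 - t))) / (2 * Real.sqrt (1 - t))) ∂volume) ∂P ∧
    (∫⁻ ω, (∫⁻ t in Icc (0 : ℝ) 1, ENNReal.ofReal
        (Real.exp ((W ω (1 - t)) ^ 2 / (4 * (1 - t))) / (2 * Real.sqrt (1 - t))) ∂volume) ∂P)
      < ⊤ := by
  constructor
  · refine lintegral_mono fun ω => ?_
    exact key (fun t => W ω (1 - t)) (fun t => b (1 - t) (W ω (1 - t)))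
      (fun t ht => hb_bdd (1 - t) ⟨by linarith [ht.2], by linarith [ht.1]⟩ _)
  · set ρ : Measure ℝ := volume.restrict (Icc (0:ℝ) 1) with hρ
    set G : Ω → ℝ → ℝ≥0∞ := fun ω t => ENNReal.ofReal
      (Real.exp ((W ω (1 - t)) ^ 2 / (4 * (1 - t))) / (2 * Real.sqrt (1 - t))) with hG
    -- a.e. joint measurability of (ω, t) ↦ W ω (1 - t)
    obtain ⟨S, hsub, hSm, hS0⟩ :=
      exists_measurable_superset_of_null
        (ae_iff.1 hW.cont : P {ω | ¬ Continuous (W ω)} = 0)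
    set u : ℕ → ℝ → ℝ := fun n s => ((⌈s * ((n : ℝ) + 1)⌉ : ℤ) : ℝ) / ((n : ℝ) + 1) with hu
    have hgm : ∀ n : ℕ, Measurable (fun p : Ω × ℝ => W p.1 (u n (1 - p.2))) := by
      intro n
      have h2 : Measurable (fun q : Ω × ℤ => W q.1 ((q.2 : ℝ) / ((n : ℝ) + 1))) :=
        measurable_from_prod_countable_left fun k =>
          (hW.meas ((k : ℝ) / ((n : ℝ) + 1)) : Measurable fun ω : Ω => W ω ((k : ℝ) / ((n : ℝ) + 1)))
      have h1 : Measurable (fun p : Ω × ℝ => (p.1, (⌈(1 - p.2) * ((n : ℝ) + 1)⌉ : ℤ))) :=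
        measurable_fst.prodMk ((measurable_const.sub measurable_snd).mul
          measurable_const).ceil
      exact h2.comp h1
    have hconv : ∀ᵐ p ∂(P.prod ρ), Filter.Tendsto
        (fun n : ℕ => W p.1 (u n (1 - p.2))) Filter.atTop
        (nhds (W p.1 (1 - p.2))) := by
      rw [ae_iff]
      have hnull : (P.prod ρ) (S ×ˢ (univ : Set ℝ)) = 0 := by
        rw [Measure.prod_prod, hS0, zero_mul]
      refine measure_mono_null (fun p hp => ?_) hnull
      · simp only [mem_setOf_eq] at hp
        by_contra hpS
        apply hp
        have hcont : Continuous (W p.1) := by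
          by_contra hnc
          exact hpS ⟨hsub hnc, mem_univ _⟩
        have hud : Filter.Tendsto (fun n : ℕ => u n (1 - p.2))
            Filter.atTop (nhds (1 - p.2)) := by
          have hlow : ∀ n : ℕ, 1 - p.2 ≤ u n (1 - p.2) := by
            intro n
            rw [hu]
            simp only
            rw [le_div_iff₀ (by positivity)]
            exact Int.le_ceil _
          have hup : ∀ n : ℕ, u n (1 - p.2) ≤ (1 - p.2) + 1 / ((n : ℝ) + 1) := by
            intro n
            rw [hu]
            simp only
            rw [div_le_iff₀ (by positivity)]
            have h3 := (Int.ceil_lt_add_one ((1 - p.2) * ((n : ℝ) + 1))).le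
            calc ((⌈(1 - p.2) * ((n : ℝ) + 1)⌉ : ℤ) : ℝ)
                ≤ (1 - p.2) * ((n : ℝ) + 1) + 1 := h3
              _ = ((1 - p.2) + 1 / ((n : ℝ) + 1)) * ((n : ℝ) + 1) := by field_simp
          have hupt : Filter.Tendsto (fun n : ℕ => (1 - p.2) + 1 / ((n : ℝ) + 1))
              Filter.atTop (nhds (1 - p.2)) := by
            have := tendsto_one_div_add_atTop_nhds_zero_nat (𝕜 := ℝ)
            simpa using tendsto_const_nhds.add this
          exact tendsto_of_tendsto_of_tendsto_of_le_of_le tendsto_const_nhds hupt hlow hup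
        exact (hcont.tendsto (1 - p.2)).comp hud
    have hWae : AEMeasurable (fun p : Ω × ℝ => W p.1 (1 - p.2)) (P.prod ρ) :=
      aemeasurable_of_tendsto_metrizable_ae _ (fun n => (hgm n).aemeasurable) hconv
    have houter : Measurable (fun q : ℝ × ℝ =>
        ENNReal.ofReal (Real.exp (q.1 ^ 2 / (4 * (1 - q.2))) / (2 * Real.sqrt (1 - q.2)))) := by
      apply Measurable.ennreal_ofReal
      apply Measurable.div
      · exact Real.measurable_exp.comp ((measurable_fst.pow_const 2).div
          ((measurable_const.sub measurable_snd).const_mul 4))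
      · exact (Real.continuous_sqrt.measurable.comp
          (measurable_const.sub measurable_snd)).const_mul 2
    have hF : AEMeasurable (Function.uncurry G) (P.prod ρ) := by
      have : Function.uncurry G = (fun q : ℝ × ℝ =>
          ENNReal.ofReal (Real.exp (q.1 ^ 2 / (4 * (1 - q.2))) / (2 * Real.sqrt (1 - q.2))))
          ∘ (fun p : Ω × ℝ => (W p.1 (1 - p.2), p.2)) := rfl
      rw [this]
      exact houter.comp_aemeasurable (hWae.prodMk measurable_snd.aemeasurable)
    have hswap : (∫⁻ ω, (∫⁻ t, G ω t ∂ρ) ∂P) = ∫⁻ t, (∫⁻ ω, G ω t ∂P) ∂ρ :=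
      lintegral_lintegral_swap hF
    have hIco : ∀ᵐ t ∂ρ, t ∈ Ico (0:ℝ) 1 := by
      have h1 : ∀ᵐ t ∂ρ, t ∈ Icc (0:ℝ) 1 := ae_restrict_mem measurableSet_Icc
      have h2 : ∀ᵐ t ∂ρ, t ≠ 1 := by
        rw [ae_iff]
        have hnull1 : ρ ({1} : Set ℝ) = 0 := by
          rw [hρ, Measure.restrict_apply (measurableSet_singleton 1)]
          exact measure_mono_null inter_subset_left (measure_singleton 1)
        refine measure_mono_null (fun t ht => ?_) hnull1
        simp only [mem_setOf_eq, not_not] at ht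
        simp [ht]
      filter_upwards [h1, h2] with t h1 h2
      exact ⟨h1.1, lt_of_le_of_ne h1.2 h2⟩
    have hinner : ∀ t ∈ Ico (0:ℝ) 1,
        (∫⁻ ω, G ω t ∂P)
        = ENNReal.ofReal (Real.sqrt 2) * ENNReal.ofReal (1 / (2 * Real.sqrt (1 - t))) := by
      intro t ht
      rw [hG]
      simp only
      have hv0 : (0:ℝ) < 1 - t := by linarith [ht.2]
      have e1 : ∀ ω, ENNReal.ofReal
          (Real.exp ((W ω (1 - t)) ^ 2 / (4 * (1 - t))) / (2 * Real.sqrt (1 - t)))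
          = ENNReal.ofReal (Real.exp ((W ω (1 - t)) ^ 2 / (4 * (1 - t))))
            * ENNReal.ofReal (1 / (2 * Real.sqrt (1 - t))) := by
        intro ω
        rw [← ENNReal.ofReal_mul (Real.exp_pos _).le, mul_one_div]
      simp only [e1]
      have hmeasω : Measurable (fun ω => ENNReal.ofReal
          (Real.exp ((W ω (1 - t)) ^ 2 / (4 * (1 - t))))) :=
        (Real.measurable_exp.comp (((hW.meas (1 - t)).pow_const 2).div_const _)).ennreal_ofReal
      rw [lintegral_mul_const _ hmeasω]
      congr 1
      have hlaw : Measure.map (fun ω => W ω (1 - t)) P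
          = gaussianReal 0 (1 - t).toNNReal := by
        have h1 := hW.incr_law 0 (1 - t) le_rfl hv0.le
        rw [sub_zero] at h1
        rw [← h1]
        apply Measure.map_congr
        filter_upwards [hW.init] with ω h0
        rw [h0, sub_zero]
      have hmeas' : Measurable fun y : ℝ => ENNReal.ofReal (Real.exp (y ^ 2 / (4 * (1 - t)))) :=
        (Real.measurable_exp.comp ((measurable_id.pow_const 2).div_const _)).ennreal_ofReal
      calc ∫⁻ ω, ENNReal.ofReal (Real.exp ((W ω (1 - t)) ^ 2 / (4 * (1 - t)))) ∂P
          = ∫⁻ y, ENNReal.ofReal (Real.exp (y ^ 2 / (4 * (1 - t))))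
              ∂(Measure.map (fun ω => W ω (1 - t)) P) :=
            (lintegral_map hmeas' (hW.meas (1 - t))).symm
        _ = ENNReal.ofReal (Real.sqrt 2) := by rw [hlaw]; exact gauss_calc _ hv0
    show (∫⁻ ω, (∫⁻ t, G ω t ∂ρ) ∂P) < ⊤
    calc (∫⁻ ω, (∫⁻ t, G ω t ∂ρ) ∂P)
        = ∫⁻ t, (∫⁻ ω, G ω t ∂P) ∂ρ := hswap
      _ = ∫⁻ t, ENNReal.ofReal (Real.sqrt 2)
            * ENNReal.ofReal (1 / (2 * Real.sqrt (1 - t))) ∂ρ :=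
          lintegral_congr_ae (hIco.mono fun t ht => hinner t ht)
      _ = ENNReal.ofReal (Real.sqrt 2)
            * ∫⁻ t, ENNReal.ofReal (1 / (2 * Real.sqrt (1 - t))) ∂ρ := by
          have hwmeas : Measurable fun t : ℝ => ENNReal.ofReal (1 / (2 * Real.sqrt (1 - t))) := by
            apply Measurable.ennreal_ofReal
            exact Measurable.div measurable_const
              ((Real.continuous_sqrt.measurable.comp (measurable_const.sub measurable_id)).const_mul 2)
          rw [lintegral_const_mul _ hwmeas]
      _ = ENNReal.ofReal (Real.sqrt 2) * 1 := by rw [hρ, w_lintegral]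
      _ < ⊤ := by rw [mul_one]; exact ENNReal.ofReal_lt_top
end
end

section
/- Let b : [0,T] × ℝ^d → ℝ^d be Borel measurable and suppose: there exists M₁ ∈ L^{q₁}([0,T], ℝ) with |b(t,x)| ≤ M₁(t) for all t, x, and there exist M₂ ∈ L^{q₂}([0,T], ℝ) and β > 0 with |b(t,x) − b(t,y)| ≤ M₂(t) |x − y|^β for all t, x, y; let 1/p₁ + 1/q₁ = 1 and 1/p₂ + 1/q₂ = 1 with q₁, q₂ > 1. Then for any continuous path w, any 0 ≤ u ≤ r ≤ T, and any two continuous functions Y, Z : [u,r] → ℝ^d with Y_u = Z_u that both satisfy X_t = X_u + (w_t − w_u) + ∫_u^t b(s, X_s) ds on [u,r], one has |Y_r − Z_r| ≤ (2‖M₁‖_{L^{q₁}[0,T]})^β ‖M₂‖_{L^{q₂}[0,T]} (r − u)^{β/p₁ + 1/p₂}. -/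
open MeasureTheory Set
open scoped ENNReal

noncomputable section

lemma int_norm_le_eLpNorm_mul {T a c qq : ℝ} (hq : 1 < qq) (f : ℝ → ℝ)
    (hf : MemLp f (ENNReal.ofReal qq) (volume.restrict (Icc (0:ℝ) T)))
    (h0a : 0 ≤ a) (hac : a ≤ c) (hcT : c ≤ T) :
    ∫ x in Ioc a c, ‖f x‖ ≤
      (eLpNorm f (ENNReal.ofReal qq) (volume.restrict (Icc (0:ℝ) T))).toReal *
        (c - a) ^ (1 - 1/qq) := by
  set q : ℝ≥0∞ := ENNReal.ofReal qq with hqdef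
  have hq1 : (1 : ℝ≥0∞) ≤ q := by
    rw [hqdef, ← ENNReal.ofReal_one]
    exact ENNReal.ofReal_le_ofReal hq.le
  have hsub : Ioc a c ⊆ Icc (0:ℝ) T := fun x hx => ⟨h0a.trans hx.1.le, hx.2.trans hcT⟩
  have hmono : volume.restrict (Ioc a c) ≤ volume.restrict (Icc (0:ℝ) T) :=
    Measure.restrict_mono hsub le_rfl
  have hf' : MemLp f q (volume.restrict (Ioc a c)) := hf.mono_measure hmono
  have hfint : Integrable f (volume.restrict (Ioc a c)) := hf'.integrable hq1
  have h1 : ∫ x in Ioc a c, ‖f x‖ = (eLpNorm f 1 (volume.restrict (Ioc a c))).toReal := by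
    rw [integral_norm_eq_lintegral_enorm hf'.1, eLpNorm_one_eq_lintegral_enorm]
  have h2 : eLpNorm f 1 (volume.restrict (Ioc a c)) ≤
      eLpNorm f q (volume.restrict (Icc (0:ℝ) T)) * ENNReal.ofReal (c - a) ^ (1 - 1/qq) := by
    have := eLpNorm_le_eLpNorm_mul_rpow_measure_univ (μ := volume.restrict (Ioc a c)) hq1 hf'.1
    have huniv : (volume.restrict (Ioc a c)) Set.univ = ENNReal.ofReal (c - a) := by
      rw [Measure.restrict_apply_univ, Real.volume_Ioc]
    have hexp : 1 / (1:ℝ≥0∞).toReal - 1 / q.toReal = 1 - 1/qq := by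
      rw [hqdef, ENNReal.toReal_ofReal (by linarith)]
      simp
    rw [huniv, hexp] at this
    refine this.trans ?_
    gcongr
  have hfin : eLpNorm f q (volume.restrict (Icc (0:ℝ) T)) ≠ ⊤ := hf.2.ne
  have hexp_nn : (0:ℝ) ≤ 1 - 1/qq := by
    have : 1/qq < 1 := by rw [div_lt_one (by linarith)]; exact hq
    linarith
  calc ∫ x in Ioc a c, ‖f x‖
      = (eLpNorm f 1 (volume.restrict (Ioc a c))).toReal := h1
    _ ≤ ((eLpNorm f q (volume.restrict (Icc (0:ℝ) T))) * ENNReal.ofReal (c - a) ^ (1 - 1/qq)).toReal := by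
        apply ENNReal.toReal_mono _ h2
        exact ENNReal.mul_ne_top hfin (ENNReal.rpow_ne_top_of_nonneg hexp_nn ENNReal.ofReal_ne_top)
    _ = _ := by
        rw [ENNReal.toReal_mul, ← ENNReal.toReal_rpow, ENNReal.toReal_ofReal (by linarith)]

/-- Quantitative closeness of two solutions of `X_t = X_u + (w_t - w_u) + ∫_u^t b(s, X_s) ds`
on `[u, r]` with the same initial value:
`|Y_r - Z_r| ≤ (2‖M₁‖_{L^{q₁}})^β ‖M₂‖_{L^{q₂}} (r - u)^{β/p₁ + 1/p₂}`. -/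
theorem two_solutions_closeness (d : ℕ) (T : ℝ) (hT : 0 ≤ T)
    (b : ℝ → EuclideanSpace ℝ (Fin d) → EuclideanSpace ℝ (Fin d))
    (hb_meas : Measurable (Function.uncurry b))
    (q₁ q₂ p₁ p₂ β : ℝ) (hq₁ : 1 < q₁) (hq₂ : 1 < q₂)
    (hp₁ : 1 / p₁ + 1 / q₁ = 1) (hp₂ : 1 / p₂ + 1 / q₂ = 1) (hβ : 0 < β)
    (M₁ M₂ : ℝ → ℝ)
    (hM₁ : MemLp M₁ (ENNReal.ofReal q₁) (volume.restrict (Icc (0 : ℝ) T)))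
    (hb_bdd : ∀ t ∈ Icc (0 : ℝ) T, ∀ x, ‖b t x‖ ≤ M₁ t)
    (hM₂ : MemLp M₂ (ENNReal.ofReal q₂) (volume.restrict (Icc (0 : ℝ) T)))
    (hb_hold : ∀ t ∈ Icc (0 : ℝ) T, ∀ x y, ‖b t x - b t y‖ ≤ M₂ t * ‖x - y‖ ^ β)
    (w : ℝ → EuclideanSpace ℝ (Fin d)) (hw_cont : ContinuousOn w (Icc 0 T))
    (u r : ℝ) (hu : 0 ≤ u) (hur : u ≤ r) (hr : r ≤ T)
    (Y Z : ℝ → EuclideanSpace ℝ (Fin d))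
    (hY_cont : ContinuousOn Y (Icc u r)) (hZ_cont : ContinuousOn Z (Icc u r))
    (h_init : Y u = Z u)
    (hY_sol : ∀ t ∈ Icc u r, Y t = Y u + (w t - w u) + ∫ s in u..t, b s (Y s))
    (hZ_sol : ∀ t ∈ Icc u r, Z t = Z u + (w t - w u) + ∫ s in u..t, b s (Z s)) :
    ‖Y r - Z r‖ ≤
      (2 * (eLpNorm M₁ (ENNReal.ofReal q₁) (volume.restrict (Icc (0 : ℝ) T))).toReal) ^ β *
        (eLpNorm M₂ (ENNReal.ofReal q₂) (volume.restrict (Icc (0 : ℝ) T))).toReal *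
        (r - u) ^ (β / p₁ + 1 / p₂) := by
  set N₁ := (eLpNorm M₁ (ENNReal.ofReal q₁) (volume.restrict (Icc (0:ℝ) T))).toReal with hN₁def
  set N₂ := (eLpNorm M₂ (ENNReal.ofReal q₂) (volume.restrict (Icc (0:ℝ) T))).toReal with hN₂def
  have hN₁0 : 0 ≤ N₁ := ENNReal.toReal_nonneg
  have hN₂0 : 0 ≤ N₂ := ENNReal.toReal_nonneg
  have hq₁inv : 1/q₁ < 1 := by rw [div_lt_one (by linarith)]; exact hq₁
  have hq₂inv : 1/q₂ < 1 := by rw [div_lt_one (by linarith)]; exact hq₂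
  have hq₁inv0 : 0 < 1/q₁ := by positivity
  have hq₂inv0 : 0 < 1/q₂ := by positivity
  have hp₁' : 1/p₁ = 1 - 1/q₁ := by linarith
  have hp₂' : 1/p₂ = 1 - 1/q₂ := by linarith
  have hp₁pos : 0 < 1/p₁ := by rw [hp₁']; linarith
  have hp₂pos : 0 < 1/p₂ := by rw [hp₂']; linarith
  -- trivial case
  rcases eq_or_lt_of_le hur with hru | hru
  · have h1 : Y r - Z r = 0 := by rw [← hru, h_init, sub_self]
    have h2 : r - u = 0 := by rw [← hru, sub_self]
    have hexp : 0 < β/p₁ + 1/p₂ := by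
      have h3 : β/p₁ = β * (1/p₁) := by ring
      nlinarith
    rw [h1, h2, norm_zero, Real.zero_rpow hexp.ne', mul_zero]
  have hsub : Icc u r ⊆ Icc (0:ℝ) T := fun x hx => ⟨hu.trans hx.1, hx.2.trans hr⟩
  have hq1ENN : (1 : ℝ≥0∞) ≤ ENNReal.ofReal q₁ := by
    rw [← ENNReal.ofReal_one]; exact ENNReal.ofReal_le_ofReal hq₁.le
  have hq2ENN : (1 : ℝ≥0∞) ≤ ENNReal.ofReal q₂ := by
    rw [← ENNReal.ofReal_one]; exact ENNReal.ofReal_le_ofReal hq₂.le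
  have hrmono : volume.restrict (Icc u r) ≤ volume.restrict (Icc (0:ℝ) T) :=
    Measure.restrict_mono hsub le_rfl
  have hM₁int : IntegrableOn M₁ (Icc u r) := (hM₁.mono_measure hrmono).integrable hq1ENN
  have hM₂int : IntegrableOn M₂ (Icc u r) := (hM₂.mono_measure hrmono).integrable hq2ENN
  -- measurability / integrability of the composed drifts
  have hcomp : ∀ (X : ℝ → EuclideanSpace ℝ (Fin d)), ContinuousOn X (Icc u r) →
      IntegrableOn (fun s => b s (X s)) (Icc u r) := by
    intro X hX
    have hX_aem : AEMeasurable X (volume.restrict (Icc u r)) :=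
      hX.aemeasurable measurableSet_Icc
    have hpair : AEMeasurable (fun s => (s, X s)) (volume.restrict (Icc u r)) :=
      aemeasurable_id.prodMk hX_aem
    have hmeas : AEStronglyMeasurable (fun s => b s (X s)) (volume.restrict (Icc u r)) :=
      (hb_meas.comp_aemeasurable hpair).aestronglyMeasurable
    refine Integrable.mono' hM₁int hmeas ?_
    filter_upwards [ae_restrict_mem measurableSet_Icc] with s hs
    exact hb_bdd s (hsub hs) (X s)
  have hbY_int := hcomp Y hY_cont
  have hbZ_int := hcomp Z hZ_cont
  set F := fun s => b s (Y s) - b s (Z s) with hFdef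
  have hF_int : IntegrableOn F (Icc u r) := hbY_int.sub hbZ_int
  -- key identity
  have hkey : ∀ t ∈ Icc u r, Y t - Z t = ∫ s in Ioc u t, F s := by
    intro t ht
    have hIY : IntervalIntegrable (fun s => b s (Y s)) volume u t := by
      rw [intervalIntegrable_iff_integrableOn_Ioc_of_le ht.1]
      exact (hbY_int.mono_set (Ioc_subset_Icc_self.trans (Icc_subset_Icc le_rfl ht.2)))
    have hIZ : IntervalIntegrable (fun s => b s (Z s)) volume u t := by
      rw [intervalIntegrable_iff_integrableOn_Ioc_of_le ht.1]
      exact (hbZ_int.mono_set (Ioc_subset_Icc_self.trans (Icc_subset_Icc le_rfl ht.2)))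
    have : Y t - Z t = (∫ s in u..t, b s (Y s)) - ∫ s in u..t, b s (Z s) := by
      rw [hY_sol t ht, hZ_sol t ht, h_init]; abel
    rw [this, ← intervalIntegral.integral_sub hIY hIZ,
      intervalIntegral.integral_of_le ht.1]
  -- uniform bound on ‖Y s - Z s‖
  have hYZ_bdd : ∀ s ∈ Icc u r, ‖Y s - Z s‖ ≤ 2 * N₁ * (s - u) ^ (1 - 1/q₁) := by
    intro s hs
    rw [hkey s hs]
    calc ‖∫ x in Ioc u s, F x‖ ≤ ∫ x in Ioc u s, ‖F x‖ := norm_integral_le_integral_norm F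
      _ ≤ ∫ x in Ioc u s, 2 * ‖M₁ x‖ := by
          refine integral_mono_ae
            ((hF_int.mono_set (Ioc_subset_Icc_self.trans (Icc_subset_Icc le_rfl hs.2))).norm)
            (((hM₁int.mono_set (Ioc_subset_Icc_self.trans (Icc_subset_Icc le_rfl hs.2))).norm).const_mul 2) ?_
          filter_upwards [ae_restrict_mem measurableSet_Ioc] with x hx
          have hx' : x ∈ Icc (0:ℝ) T :=
            hsub ⟨hx.1.le, hx.2.trans hs.2⟩
          calc ‖F x‖ ≤ ‖b x (Y x)‖ + ‖b x (Z x)‖ := norm_sub_le _ _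
            _ ≤ M₁ x + M₁ x := add_le_add (hb_bdd x hx' (Y x)) (hb_bdd x hx' (Z x))
            _ ≤ 2 * ‖M₁ x‖ := by rw [two_mul]; exact add_le_add (le_abs_self _) (le_abs_self _)
      _ = 2 * ∫ x in Ioc u s, ‖M₁ x‖ := integral_const_mul 2 _
      _ ≤ 2 * (N₁ * (s - u) ^ (1 - 1/q₁)) := by
          have := int_norm_le_eLpNorm_mul (a := u) (c := s) hq₁ M₁ hM₁ hu hs.1 (hs.2.trans hr)
          linarith
      _ = 2 * N₁ * (s - u) ^ (1 - 1/q₁) := by ring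
  -- final estimate
  set C := (2 * N₁) ^ β * (r - u) ^ (β / p₁) with hCdef
  have hC0 : 0 ≤ C :=
    mul_nonneg (Real.rpow_nonneg (by linarith) _) (Real.rpow_nonneg (by linarith) _)
  have hYr : Y r - Z r = ∫ s in Ioc u r, F s := hkey r ⟨hur, le_rfl⟩
  have hptwise : ∀ x ∈ Ioc u r, ‖F x‖ ≤ ‖M₂ x‖ * C := by
    intro x hx
    have hx1 : x ∈ Icc u r := ⟨hx.1.le, hx.2⟩
    have hx' : x ∈ Icc (0:ℝ) T := hsub hx1
    have h1 : ‖F x‖ ≤ M₂ x * ‖Y x - Z x‖ ^ β := hb_hold x hx' (Y x) (Z x)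
    have hAβ : ‖Y x - Z x‖ ^ β ≤ C := by
      have hA : ‖Y x - Z x‖ ≤ 2 * N₁ * (r - u) ^ (1 - 1/q₁) := by
        refine (hYZ_bdd x hx1).trans ?_
        have : (x - u) ^ (1 - 1/q₁) ≤ (r - u) ^ (1 - 1/q₁) :=
          Real.rpow_le_rpow (by linarith [hx.1.le]) (by linarith [hx.2]) (by linarith)
        nlinarith [Real.rpow_nonneg (show (0:ℝ) ≤ x - u by linarith [hx.1.le]) (1 - 1/q₁)]
      calc ‖Y x - Z x‖ ^ β ≤ (2 * N₁ * (r - u) ^ (1 - 1/q₁)) ^ β :=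
            Real.rpow_le_rpow (norm_nonneg _) hA hβ.le
        _ = C := by
            rw [hCdef, Real.mul_rpow (by linarith) (Real.rpow_nonneg (by linarith) _),
              ← Real.rpow_mul (by linarith : (0:ℝ) ≤ r - u),
              show (1 - 1/q₁) * β = β/p₁ from by rw [← hp₁']; ring]
    rcases le_or_gt (M₂ x) 0 with hM | hM
    · have : M₂ x * ‖Y x - Z x‖ ^ β ≤ 0 :=
        mul_nonpos_of_nonpos_of_nonneg hM (Real.rpow_nonneg (norm_nonneg _) β)
      exact h1.trans (this.trans (by positivity))
    · refine h1.trans ?_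
      have : M₂ x ≤ ‖M₂ x‖ := le_abs_self _
      exact mul_le_mul this hAβ (Real.rpow_nonneg (norm_nonneg _) β) (norm_nonneg _)
  have hmain : ‖Y r - Z r‖ ≤ (N₂ * (r - u) ^ (1 - 1/q₂)) * C := by
    rw [hYr]
    calc ‖∫ x in Ioc u r, F x‖ ≤ ∫ x in Ioc u r, ‖F x‖ := norm_integral_le_integral_norm F
      _ ≤ ∫ x in Ioc u r, ‖M₂ x‖ * C := by
          refine integral_mono_ae ((hF_int.mono_set Ioc_subset_Icc_self).norm)
            (((hM₂int.mono_set Ioc_subset_Icc_self).norm).mul_const C) ?_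
          filter_upwards [ae_restrict_mem measurableSet_Ioc] with x hx
          exact hptwise x hx
      _ = (∫ x in Ioc u r, ‖M₂ x‖) * C := integral_mul_const C _
      _ ≤ (N₂ * (r - u) ^ (1 - 1/q₂)) * C := by
          refine mul_le_mul_of_nonneg_right ?_ hC0
          exact int_norm_le_eLpNorm_mul hq₂ M₂ hM₂ hu hur hr
  refine hmain.trans (le_of_eq ?_)
  rw [hCdef, Real.rpow_add (by linarith : (0:ℝ) < r - u), hp₂']
  ring
end
end
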